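/- Let D be a digraph, F an arborescence of D rooted at some vertex (a spanning tree with all edges directed away from the root), and suppose that for every edge xy of D not in F there exists a directed path in F from y to x. Then every directed cycle of D contains exactly one edge of E(D) ∖ E(F). -/

import Mathlib

/-- A multidigraph on vertex type `V` with edge type `E`. -/
structure MDG (V : Type) (E : Type) where
  tail : E → V
  head : E → V

namespace MDG

variable {V E : Type}

/-- A directed walk from `u` to `w`, given as the list of its edges. -/
inductive IsWalk (D : MDG V E) : V → V → List E → Prop
  | nil (v : V) : IsWalk D v v []
  | cons {u w : V} {e : E} {p : List E} :
      D.tail e = u → IsWalk D (D.head e) w p → IsWalk D u w (e :: p)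

/-- Out-degree of a vertex. -/
def outDeg (D : MDG V E) [Fintype E] [DecidableEq V] (v : V) : ℕ :=
  (Finset.univ.filter fun e => D.tail e = v).card

/-- In-degree of a vertex. -/
def inDeg (D : MDG V E) [Fintype E] [DecidableEq V] (v : V) : ℕ :=
  (Finset.univ.filter fun e => D.head e = v).card

/-- Eulerian: in-degree equals out-degree at every vertex. -/
def Eulerian (D : MDG V E) [Fintype E] [DecidableEq V] : Prop :=
  ∀ v, D.outDeg v = D.inDeg v

/-- Simple: no loops, and at most one edge per ordered pair of vertices. -/
def Simple (D : MDG V E) : Prop :=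
  (∀ e, D.tail e ≠ D.head e) ∧
  ∀ e e', D.tail e = D.tail e' → D.head e = D.head e' → e = e'

/-- `d⁺(X)`: number of edges from `X` to its complement. -/
def cutOut (D : MDG V E) [Fintype E] [DecidableEq V] (X : Finset V) : ℕ :=
  (Finset.univ.filter fun e => D.tail e ∈ X ∧ D.head e ∉ X).card

/-- `d⁻(X)`: number of edges from the complement of `X` into `X`. -/
def cutIn (D : MDG V E) [Fintype E] [DecidableEq V] (X : Finset V) : ℕ :=
  (Finset.univ.filter fun e => D.head e ∈ X ∧ D.tail e ∉ X).card

/-- `d(X) = d⁺(X) + d⁻(X)`. -/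
def cut (D : MDG V E) [Fintype E] [DecidableEq V] (X : Finset V) : ℕ :=
  D.cutOut X + D.cutIn X

/-- Adjacency: there is an edge from `a` to `b`. -/
def Adj (D : MDG V E) (a b : V) : Prop :=
  ∃ e, D.tail e = a ∧ D.head e = b

/-- Immersion of the complete digraph `K⃗_t`: an injection `φ : Fin t → V` together with
pairwise edge-disjoint directed trails, one from `φ i` to `φ j` for each ordered pair
`i ≠ j`. -/
def ImmerseK (D : MDG V E) (t : ℕ) : Prop :=
  ∃ φ : Fin t → V, Function.Injective φ ∧
    ∃ P : Fin t → Fin t → List E,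
      (∀ i j : Fin t, i ≠ j → D.IsWalk (φ i) (φ j) (P i j) ∧ (P i j).Nodup) ∧
      ∀ i j i' j' : Fin t, (i, j) ≠ (i', j') → ∀ e, e ∈ P i j → e ∉ P i' j'

/-- Immersion of a multidigraph `F` in `D`: an injection of the vertices together with
pairwise edge-disjoint directed trails realizing the edges of `F`. -/
def Immerse (D : MDG V E) {n m : ℕ} (F : MDG (Fin n) (Fin m)) : Prop :=
  ∃ φ : Fin n → V, Function.Injective φ ∧
    ∃ P : Fin m → List E,
      (∀ f, D.IsWalk (φ (F.tail f)) (φ (F.head f)) (P f) ∧ (P f).Nodup) ∧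
      ∀ f f', f ≠ f' → ∀ e, e ∈ P f → e ∉ P f'

end MDG

namespace MDG

variable {V E : Type}

variable {D : MDG V E}

lemma IsWalk.nil_inv {u w : V} (h : D.IsWalk u w ([] : List E)) : u = w := by
  cases h; rfl

lemma IsWalk.cons_inv {u w : V} {e : E} {q : List E} (h : D.IsWalk u w (e :: q)) :
    D.tail e = u ∧ D.IsWalk (D.head e) w q := by
  cases h with | cons ht h' => exact ⟨ht, h'⟩

lemma IsWalk.append' {u v w : V} {p q : List E} (hp : D.IsWalk u v p) (hq : D.IsWalk v w q) :
    D.IsWalk u w (p ++ q) := by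
  induction hp with
  | nil => simpa using hq
  | cons ht _ ih => exact .cons ht (ih hq)

lemma IsWalk.split {u w : V} {p q : List E} (h : D.IsWalk u w (p ++ q)) :
    ∃ x, D.IsWalk u x p ∧ D.IsWalk x w q := by
  induction p generalizing u with
  | nil => exact ⟨u, .nil u, h⟩
  | cons e p ih =>
    obtain ⟨ht, h'⟩ := h.cons_inv
    obtain ⟨x, h1, h2⟩ := ih h'
    exact ⟨x, .cons ht h1, h2⟩

lemma IsWalk.end_unique {u w w' : V} {p : List E} (h : D.IsWalk u w p) (h' : D.IsWalk u w' p) :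
    w = w' := by
  induction p generalizing u with
  | nil => rw [← h.nil_inv, ← h'.nil_inv]
  | cons e p ih => exact ih h.cons_inv.2 h'.cons_inv.2

lemma IsWalk.snoc_inv {u w : V} {p : List E} (h : D.IsWalk u w p) (hne : p ≠ []) :
    ∃ q e, p = q ++ [e] ∧ D.IsWalk u (D.tail e) q ∧ D.head e = w := by
  rcases List.eq_nil_or_concat p with rfl | ⟨q, e, rfl⟩
  · exact absurd rfl hne
  · rw [List.concat_eq_append] at h
    obtain ⟨x, h1, h2⟩ := h.split
    obtain ⟨ht, hh⟩ := h2.cons_inv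
    refine ⟨q, e, by simp, ?_, hh.nil_inv⟩
    rwa [← ht] at h1

lemma walk_unique (D : MDG V E) (r : V) (F : Set E)
    (hroot : ∀ e ∈ F, D.head e ≠ r)
    (huniq : ∀ v : V, v ≠ r → ∃! e, e ∈ F ∧ D.head e = v) :
    ∀ (p : List E) (v : V) (q : List E), D.IsWalk r v p → (∀ e ∈ p, e ∈ F) →
      D.IsWalk r v q → (∀ e ∈ q, e ∈ F) → p = q := by
  intro p
  induction p using List.reverseRecOn with
  | nil =>
    intro v q hp _ hq hqF
    have hv : v = r := hp.nil_inv.symm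
    subst hv
    by_contra hqne
    obtain ⟨q', e, _, _, hh⟩ := hq.snoc_inv (by rintro rfl; exact hqne rfl)
    exact hroot e (hqF e (by simp [*])) hh
  | append_singleton p' e ih =>
    intro v q hp hpF hq hqF
    obtain ⟨x, h1, h2⟩ := hp.split
    obtain ⟨ht, hh⟩ := h2.cons_inv
    have hhe : D.head e = v := hh.nil_inv
    have heF : e ∈ F := hpF e (by simp)
    have hvr : v ≠ r := by rw [← hhe]; exact hroot e heF
    have hqne : q ≠ [] := by rintro rfl; exact hvr hq.nil_inv.symm
    obtain ⟨q', f, rfl, hq', hhf⟩ := hq.snoc_inv hqne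
    have hfF : f ∈ F := hqF f (by simp)
    obtain ⟨g, _, hgu⟩ := huniq v hvr
    have hef : e = f := (hgu e ⟨heF, hhe⟩).trans (hgu f ⟨hfF, hhf⟩).symm
    subst hef
    have h1' : D.IsWalk r (D.tail e) p' := by rwa [ht]
    rw [ih (D.tail e) q' h1' (fun g hg => hpF g (by simp [hg])) hq'
      (fun g hg => hqF g (by simp [hg]))]

lemma exists_first_not {q : List E} {F : Set E} (h : ¬ ∀ e ∈ q, e ∈ F) :
    ∃ q1 f q2, q = q1 ++ f :: q2 ∧ f ∉ F ∧ ∀ g ∈ q1, g ∈ F := by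
  induction q with
  | nil => simp at h
  | cons a q ih =>
    by_cases ha : a ∈ F
    · have h' : ¬ ∀ e ∈ q, e ∈ F := fun hq => h (by
        intro e he
        rcases List.mem_cons.mp he with rfl | he
        · exact ha
        · exact hq e he)
      obtain ⟨q1, f, q2, rfl, hf, h1⟩ := ih h'
      refine ⟨a :: q1, f, q2, rfl, hf, ?_⟩
      intro g hg
      rcases List.mem_cons.mp hg with rfl | hg
      · exact ha
      · exact h1 g hg
    · exact ⟨[], a, q, rfl, ha, by simp⟩

end MDG

/-- Let `F` be an arborescence of `D` rooted at `r` (no `F`-edge enters `r`, every other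
vertex has exactly one entering `F`-edge, and every vertex is reachable from `r` by an
`F`-walk). If for every edge `e ∉ F` there is a directed `F`-path from the head of `e` to
its tail, then every directed cycle of `D` contains exactly one edge not in `F`. -/
theorem cycle_one_nontree_edge {V E : Type} (D : MDG V E) (r : V) (F : Set E)
    (hroot : ∀ e ∈ F, D.head e ≠ r)
    (huniq : ∀ v : V, v ≠ r → ∃! e, e ∈ F ∧ D.head e = v)
    (hreach : ∀ v : V, ∃ p, D.IsWalk r v p ∧ ∀ e ∈ p, e ∈ F)
    (hback : ∀ e, e ∉ F → ∃ p, D.IsWalk (D.head e) (D.tail e) p ∧ ∀ f ∈ p, f ∈ F)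
    (v : V) (p : List E) (hne : p ≠ []) (hw : D.IsWalk v v p)
    (hnodup : (p.map D.tail).Nodup) :
    ∃! e, e ∈ p ∧ e ∉ F := by
  classical
  choose anc hancW hancF using hreach
  have uniqW := MDG.walk_unique D r F hroot huniq
  have anc_walk : ∀ (q : List E) (u w : V), D.IsWalk u w q → (∀ e ∈ q, e ∈ F) →
      anc w = anc u ++ q := by
    intro q u w hq hqF
    refine uniqW (anc w) w (anc u ++ q) (hancW w) (hancF w) ((hancW u).append' hq) ?_
    intro e he
    rcases List.mem_append.mp he with h | h
    · exact hancF u e h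
    · exact hqF e h
  have anc_inj : ∀ u w : V, anc u = anc w → u = w := by
    intro u w h
    have h2 : D.IsWalk r w (anc u) := by rw [h]; exact hancW w
    exact (hancW u).end_unique h2
  -- existence of a non-F edge on the cycle
  have hex : ∃ e, e ∈ p ∧ e ∉ F := by
    by_contra hc
    push_neg at hc
    have h0 := anc_walk p v v hw hc
    have hlen := congrArg List.length h0
    rw [List.length_append] at hlen
    exact hne (List.eq_nil_of_length_eq_zero (by omega))
  obtain ⟨e0, he0⟩ := hex
  -- pick a non-F edge whose head has minimal tree-depth
  obtain ⟨estar, hestar, hmin⟩ :=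
    Finset.exists_min_image (p.toFinset.filter fun e => e ∉ F)
      (fun e => (anc (D.head e)).length)
      ⟨e0, by simp [Finset.mem_filter, List.mem_toFinset, he0.1, he0.2]⟩
  rw [Finset.mem_filter, List.mem_toFinset] at hestar
  obtain ⟨hestarp, hestarF⟩ := hestar
  have hmin' : ∀ f, f ∈ p → f ∉ F →
      (anc (D.head estar)).length ≤ (anc (D.head f)).length := by
    intro f hf hfF
    exact hmin f (by simp [Finset.mem_filter, List.mem_toFinset, hf, hfF])
  -- rotate the cycle so that estar is the last edge
  obtain ⟨p1, p2, rfl⟩ := List.append_of_mem hestarp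
  obtain ⟨x, hw1, hw2⟩ := hw.split
  obtain ⟨hx, hw3⟩ := hw2.cons_inv
  have hw1' : D.IsWalk v (D.tail estar) p1 := by rwa [← hx] at hw1
  set w : V := D.head estar with hwdef
  set q : List E := p2 ++ p1 with hqdef
  have hwq : D.IsWalk w (D.tail estar) q := hw3.append' hw1'
  have hperm : (q ++ [estar]).Perm (p1 ++ estar :: p2) := by
    have h1 : (q ++ [estar]).Perm (estar :: (p2 ++ p1)) := List.perm_append_comm
    have h2 : (estar :: (p2 ++ p1)).Perm (estar :: (p1 ++ p2)) :=
      List.Perm.cons _ List.perm_append_comm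
    have h3 : (estar :: (p1 ++ p2)).Perm (p1 ++ estar :: p2) := List.perm_middle.symm
    exact h1.trans (h2.trans h3)
  have hnodup' : ((q ++ [estar]).map D.tail).Nodup :=
    ((hperm.map D.tail).nodup_iff).mpr hnodup
  -- claim: every edge of q is in F
  have hqF : ∀ f ∈ q, f ∈ F := by
    by_contra hc
    obtain ⟨q1, f, q2, hqeq, hfF, hq1F⟩ := MDG.exists_first_not hc
    have hw4 : D.IsWalk w (D.tail estar) (q1 ++ f :: q2) := by rwa [hqeq] at hwq
    obtain ⟨x1, hwq1, hwf⟩ := hw4.split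
    obtain ⟨hxf, hwrest⟩ := hwf.cons_inv
    have hwq1' : D.IsWalk w (D.tail f) q1 := by rwa [← hxf] at hwq1
    have h1 : anc (D.tail f) = anc w ++ q1 := anc_walk q1 w (D.tail f) hwq1' hq1F
    have hpre : anc (D.head f) <+: anc (D.tail f) := by
      obtain ⟨pb, hpb, hpbF⟩ := hback f hfF
      exact ⟨pb, (anc_walk pb _ _ hpb hpbF).symm⟩
    have hfp : f ∈ p1 ++ estar :: p2 :=
      hperm.subset (by rw [hqeq]; simp)
    have hlen : (anc w).length ≤ (anc (D.head f)).length := hmin' f hfp hfF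
    have hpre2 : anc w <+: anc (D.head f) := by
      refine List.prefix_of_prefix_length_le ?_ hpre hlen
      rw [h1]; exact List.prefix_append _ _
    obtain ⟨t, ht⟩ := hpre2
    have htpre : t <+: q1 := by
      have h2 : anc w ++ t <+: anc w ++ q1 := by rw [ht, ← h1]; exact hpre
      exact (List.prefix_append_right_inj _).mp h2
    obtain ⟨t', ht'⟩ := htpre
    have hwq1'' : D.IsWalk w (D.tail f) (t ++ t') := by rwa [← ht'] at hwq1'
    obtain ⟨y, hwt, hwt'⟩ := hwq1''.split
    have hyanc : anc y = anc w ++ t :=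
      anc_walk t w y hwt (fun g hg => hq1F g (by rw [← ht']; exact List.mem_append_left _ hg))
    have hy : y = D.head f := anc_inj _ _ (by rw [hyanc, ht])
    -- the portion after f
    set R : List E := q2 ++ [estar] with hRdef
    have hwR : D.IsWalk (D.head f) w R := by
      refine hwrest.append' ?_
      exact .cons rfl (.nil _)
    obtain ⟨g2, R', hg2⟩ : ∃ g2 R', R = g2 :: R' := by
      rw [hRdef]; cases q2 <;> exact ⟨_, _, rfl⟩
    have hg2tail : D.tail g2 = D.head f := by
      rw [hg2] at hwR; exact hwR.cons_inv.1
    have hg2R : g2 ∈ R := by rw [hg2]; simp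
    -- produce the decomposition q ++ [estar] = A ++ g1 :: m with tail g1 = head f, g2 ∈ m
    have hdec : ∃ (A : List E) (g1 : E) (m : List E),
        q ++ [estar] = A ++ g1 :: m ∧ D.tail g1 = D.head f ∧ g2 ∈ m := by
      cases t' with
      | nil =>
        have hyf : y = D.tail f := hwt'.nil_inv
        refine ⟨t, f, R, ?_, by rw [← hy, hyf], hg2R⟩
        rw [hqeq, ← ht']; simp [hRdef]
      | cons g t'' =>
        have hgt : D.tail g = y := hwt'.cons_inv.1
        refine ⟨t, g, t'' ++ f :: R, ?_, by rw [hgt, hy], ?_⟩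
        · rw [hqeq, ← ht']; simp [hRdef]
        · exact List.mem_append_right _ (List.mem_cons_of_mem _ hg2R)
    obtain ⟨A, g1, m, hdeceq, hg1tail, hg2m⟩ := hdec
    have hnd := hnodup'
    rw [hdeceq, List.map_append, List.map_cons] at hnd
    have hnd2 := hnd.of_append_right
    have := (List.nodup_cons.mp hnd2).1
    exact this (by
      rw [hg1tail, ← hg2tail]
      exact List.mem_map_of_mem (f := D.tail) hg2m)
  -- conclude
  refine ⟨estar, ⟨hestarp, hestarF⟩, ?_⟩
  rintro e' ⟨he'p, he'F⟩
  have he'q : e' ∈ q ++ [estar] := hperm.mem_iff.mpr he'p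
  rcases List.mem_append.mp he'q with h | h
  · exact absurd (hqF e' h) he'F
  · simpa using h
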